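/- Let n ≥ 0 be an integer and a, q nonzero complex numbers with q^{2k} ≠ 1 for 1 ≤ k ≤ i+1. For integers 0 ≤ j ≤ i define κ_{i,j} = 2n(n−1) − n(i+j) − i(i−3)/2 + j(j+1)/2 and λ_{i,j} = a^{2n−i−j} q^{κ_{i,j}} · [i choose j]_q · {n+i−j−2; a}_{i−j}. Then for all integers 0 ≤ j < i one has the Pascal-type recursion λ_{i+1,j+1} = a^{−2} q^{−2(n+i−j−1)} λ_{i,j} + a^{−1} q^{−(n+i−j−2)} {n+i−j−2; a} · λ_{i,j+1}. -/

import Mathlib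

open Finset

/-- The balanced q-bracket `{n} = q^n - q^(-n)`. -/
noncomputable def qbr (q : ℂ) (n : ℤ) : ℂ := q ^ n - q ^ (-n)

/-- The two-variable bracket `{n; a} = a q^n - a⁻¹ q^(-n)`. -/
noncomputable def qbrA (a q : ℂ) (n : ℤ) : ℂ := a * q ^ n - a⁻¹ * q ^ (-n)

/-- Descending product `{n}_i = {n}{n-1}⋯{n-i+1}` (equal to 1 when `i = 0`). -/
noncomputable def qbrP (q : ℂ) (n : ℤ) (i : ℕ) : ℂ := ∏ k ∈ Finset.range i, qbr q (n - k)

/-- Descending product `{n; a}_i = {n; a}{n-1; a}⋯{n-i+1; a}` (equal to 1 when `i = 0`). -/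
noncomputable def qbrAP (a q : ℂ) (n : ℤ) (i : ℕ) : ℂ := ∏ k ∈ Finset.range i, qbrA a q (n - k)

/-- Ascending product `{n; a}{n+1; a}⋯{n+i-1; a}` (used for `{-n; a}_i`, equal to 1 when `i = 0`). -/
noncomputable def qbrAPasc (a q : ℂ) (n : ℤ) (i : ℕ) : ℂ := ∏ k ∈ Finset.range i, qbrA a q (n + k)

/-- The factorial `{n}! = {n}_n`. -/
noncomputable def qfac (q : ℂ) (n : ℕ) : ℂ := qbrP q n n

/-- The balanced q-binomial coefficient `[n choose i] = {n}!/({i}!{n-i}!)`. -/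
noncomputable def qbinom (q : ℂ) (n i : ℕ) : ℂ := qfac q n / (qfac q i * qfac q (n - i))

/-- The exponent `κ_{i,j} = 2n(n−1) − n(i+j) − i(i−3)/2 + j(j+1)/2`. -/
def kap (n i j : ℕ) : ℤ :=
  2 * (n : ℤ) * ((n : ℤ) - 1) - (n : ℤ) * ((i : ℤ) + (j : ℤ))
    - (i : ℤ) * ((i : ℤ) - 3) / 2 + (j : ℤ) * ((j : ℤ) + 1) / 2

/-- The entry `λ_{i,j} = a^{2n−i−j} q^{κ_{i,j}} [i choose j]_q {n+i−j−2; a}_{i−j}`. -/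
noncomputable def lamE (a q : ℂ) (n i j : ℕ) : ℂ :=
  a ^ (2 * (n : ℤ) - (i : ℤ) - (j : ℤ)) * q ^ (kap n i j) * qbinom q i j *
    qbrAP a q ((n : ℤ) + (i : ℤ) - (j : ℤ) - 2) (i - j)



lemma qbr_ne_zero (q : ℂ) (hq : q ≠ 0) (k : ℕ) (h : q ^ (2 * k) ≠ 1) :
    qbr q (k : ℤ) ≠ 0 := by
  intro h0
  apply h
  have h1 : q ^ (k:ℤ) = q ^ (-(k:ℤ)) := sub_eq_zero.mp h0
  have h2 : q ^ ((2*k : ℕ) : ℤ) = 1 := by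
    push_cast
    rw [two_mul, zpow_add₀ hq]
    nth_rewrite 2 [h1]
    rw [← zpow_add₀ hq]
    simp
  rw [← zpow_natCast]
  exact h2

lemma qfac_ne_zero (q : ℂ) (hq : q ≠ 0) (i : ℕ)
    (hroot : ∀ k : ℕ, 1 ≤ k → k ≤ i + 1 → q ^ (2 * k) ≠ 1)
    (k : ℕ) (hk : k ≤ i + 1) : qfac q k ≠ 0 := by
  unfold qfac qbrP
  rw [Finset.prod_ne_zero_iff]
  intro t ht
  have htk := Finset.mem_range.mp ht
  have hc : ((k:ℤ) - t) = ((k - t : ℕ) : ℤ) := by omega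
  rw [hc]
  exact qbr_ne_zero q hq (k - t) (hroot (k - t) (by omega) (by omega))

lemma qfac_succ (q : ℂ) (k : ℕ) : qfac q (k+1) = qfac q k * qbr q ((k:ℤ)+1) := by
  unfold qfac qbrP
  rw [Finset.prod_range_succ']
  congr 1
  all_goals first
    | (refine Finset.prod_congr rfl fun t _ => ?_; congr 1 <;> omega)
    | (congr 1 <;> omega)

lemma qbrAP_succ (a q : ℂ) (m : ℤ) (k : ℕ) :
    qbrAP a q m (k+1) = qbrA a q m * qbrAP a q (m-1) k := by
  unfold qbrAP
  rw [Finset.prod_range_succ', mul_comm]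
  congr 1
  all_goals first
    | (refine Finset.prod_congr rfl fun t _ => ?_; congr 1 <;> omega)
    | (congr 1 <;> omega)

lemma qbr_key (q : ℂ) (hq : q ≠ 0) (i j : ℕ) :
    qbr q ((i:ℤ)+1) = q ^ (-((i:ℤ)-(j:ℤ))) * qbr q ((j:ℤ)+1)
      + q ^ ((j:ℤ)+1) * qbr q ((i:ℤ)-(j:ℤ)) := by
  unfold qbr
  rw [mul_sub, mul_sub, ← zpow_add₀ hq, ← zpow_add₀ hq, ← zpow_add₀ hq, ← zpow_add₀ hq]
  rw [show -((i:ℤ)-j) + ((j:ℤ)+1) = ((j:ℤ)+1) + -((i:ℤ)-j) from by ring,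
      show -((i:ℤ)-j) + -((j:ℤ)+1) = -((i:ℤ)+1) from by ring,
      show ((j:ℤ)+1) + ((i:ℤ)-j) = (i:ℤ)+1 from by ring]
  ring

lemma pascal (q : ℂ) (hq : q ≠ 0) (i j : ℕ) (hij : j < i)
    (hroot : ∀ k : ℕ, 1 ≤ k → k ≤ i + 1 → q ^ (2 * k) ≠ 1) :
    qbinom q (i+1) (j+1) =
      q ^ (-((i:ℤ)-(j:ℤ))) * qbinom q i j + q ^ ((j:ℤ)+1) * qbinom q i (j+1) := by
  have hfj : qfac q j ≠ 0 := qfac_ne_zero q hq i hroot j (by omega)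
  have hfij1 : qfac q (i-j-1) ≠ 0 := qfac_ne_zero q hq i hroot (i-j-1) (by omega)
  have hc2 : ((i-j-1 : ℕ):ℤ) + 1 = (i:ℤ) - (j:ℤ) := by omega
  have hbrj1 : qbr q ((j:ℤ)+1) ≠ 0 := by
    have := qbr_ne_zero q hq (j+1) (hroot (j+1) (by omega) (by omega))
    rwa [show ((j+1:ℕ):ℤ) = (j:ℤ)+1 by omega] at this
  have hbrij : qbr q ((i:ℤ)-(j:ℤ)) ≠ 0 := by
    have := qbr_ne_zero q hq (i-j) (hroot (i-j) (by omega) (by omega))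
    rwa [show ((i-j:ℕ):ℤ) = (i:ℤ)-(j:ℤ) by omega] at this
  have L : qbinom q (i+1) (j+1) = (qfac q i * qbr q ((i:ℤ)+1)) /
      ((qfac q j * qbr q ((j:ℤ)+1)) * (qfac q (i-j-1) * qbr q ((i:ℤ)-(j:ℤ)))) := by
    unfold qbinom
    conv_lhs => rw [show i+1-(j+1) = (i-j-1)+1 by omega, qfac_succ, qfac_succ, qfac_succ]
    rw [hc2]
  have R1 : qbinom q i j = qfac q i /
      (qfac q j * (qfac q (i-j-1) * qbr q ((i:ℤ)-(j:ℤ)))) := by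
    unfold qbinom
    conv_lhs => rw [show i-j = (i-j-1)+1 by omega, qfac_succ]
    rw [hc2]
  have R2 : qbinom q i (j+1) = qfac q i /
      ((qfac q j * qbr q ((j:ℤ)+1)) * qfac q (i-j-1)) := by
    unfold qbinom
    conv_lhs => rw [show i-(j+1) = i-j-1 by omega, qfac_succ]
  rw [L, R1, R2]
  have hbr := qbr_key q hq i j
  rw [show (-((i:ℤ)-(j:ℤ))) = (j:ℤ)-(i:ℤ) from by ring] at hbr ⊢
  field_simp
  linear_combination (qfac q i) * hbr

lemma kap_closed (n i j : ℕ) (c d : ℤ) (hc : (i:ℤ)*((i:ℤ)-3) = 2*c)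
    (hd : (j:ℤ)*((j:ℤ)+1) = 2*d) :
    kap n i j = 2*(n:ℤ)*((n:ℤ)-1) - (n:ℤ)*((i:ℤ)+(j:ℤ)) - c + d := by
  unfold kap
  rw [hc, hd, Int.mul_ediv_cancel_left _ two_ne_zero, Int.mul_ediv_cancel_left _ two_ne_zero]

lemma par3 (x : ℤ) : 2 ∣ x*(x-3) := by
  rcases Int.even_or_odd x with ⟨r,hr⟩|⟨r,hr⟩
  · exact ⟨r*(x-3), by rw [hr]; ring⟩
  · exact ⟨x*(r-1), by rw [hr]; ring⟩

lemma par1 (x : ℤ) : 2 ∣ x*(x+1) := by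
  rcases Int.even_or_odd x with ⟨r,hr⟩|⟨r,hr⟩
  · exact ⟨r*(x+1), by rw [hr]; ring⟩
  · exact ⟨x*(r+1), by rw [hr]; ring⟩


set_option maxHeartbeats 2000000 in
theorem statement_2 (a q : ℂ) (ha : a ≠ 0) (hq : q ≠ 0) (n i j : ℕ)
    (hroot : ∀ k : ℕ, 1 ≤ k → k ≤ i + 1 → q ^ (2 * k) ≠ 1)
    (hij : j < i) :
    lamE a q n (i + 1) (j + 1) =
      a ^ (-2 : ℤ) * q ^ (-(2 * ((n : ℤ) + (i : ℤ) - (j : ℤ) - 1))) * lamE a q n i j +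
        a ^ (-1 : ℤ) * q ^ (-((n : ℤ) + (i : ℤ) - (j : ℤ) - 2)) *
          qbrA a q ((n : ℤ) + (i : ℤ) - (j : ℤ) - 2) * lamE a q n i (j + 1) := by
  obtain ⟨c, hc⟩ := par3 (i:ℤ)
  obtain ⟨d, hd⟩ := par1 (j:ℤ)
  have hc' : ((i+1:ℕ):ℤ)*(((i+1:ℕ):ℤ)-3) = 2*(c+(i:ℤ)-1) := by push_cast; linear_combination hc
  have hd' : ((j+1:ℕ):ℤ)*(((j+1:ℕ):ℤ)+1) = 2*(d+(j:ℤ)+1) := by push_cast; linear_combination hd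
  have K0 := kap_closed n i j c d hc hd
  have K1 := kap_closed n (i+1) (j+1) (c+(i:ℤ)-1) (d+(j:ℤ)+1) hc' hd'
  have K2 := kap_closed n i (j+1) c (d+(j:ℤ)+1) hc hd'
  have e1 : kap n (i+1) (j+1) = kap n i j - (n:ℤ) - (n:ℤ) - (i:ℤ) + (j:ℤ) + 1 + 1 := by
    rw [K1, K0]; push_cast; ring
  have e2 : kap n i (j+1) = kap n i j - (n:ℤ) + (j:ℤ) + 1 := by
    rw [K2, K0]; push_cast; ring
  unfold lamE
  push_cast
  rw [show i - j = i - j - 1 + 1 from by omega,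
      show i - (j + 1) = i - j - 1 from by omega,
      show (n:ℤ) + ((i:ℤ) + 1) - ((j:ℤ) + 1) - 2 = (n:ℤ) + (i:ℤ) - (j:ℤ) - 2 from by ring,
      show (n:ℤ) + (i:ℤ) - ((j:ℤ) + 1) - 2 = (n:ℤ) + (i:ℤ) - (j:ℤ) - 2 - 1 from by ring,
      qbrAP_succ, pascal q hq i j hij hroot, e1, e2,
      show -((i:ℤ)-(j:ℤ)) = (j:ℤ) - (i:ℤ) from by ring]
  rw [show 2 * (n:ℤ) - ((i:ℤ) + 1) - ((j:ℤ) + 1) = (n:ℤ) + (n:ℤ) - (i:ℤ) - (j:ℤ) - 1 - 1 from by ring,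
      show 2 * (n:ℤ) - (i:ℤ) - (j:ℤ) = (n:ℤ) + (n:ℤ) - (i:ℤ) - (j:ℤ) from by ring,
      show 2 * (n:ℤ) - (i:ℤ) - ((j:ℤ) + 1) = (n:ℤ) + (n:ℤ) - (i:ℤ) - (j:ℤ) - 1 from by ring,
      show -(2 * ((n:ℤ) + (i:ℤ) - (j:ℤ) - 1)) = 1 + 1 - (n:ℤ) - (n:ℤ) - (i:ℤ) - (i:ℤ) + (j:ℤ) + (j:ℤ) from by ring,
      show -((n:ℤ) + (i:ℤ) - (j:ℤ) - 2) = 1 + 1 - (n:ℤ) - (i:ℤ) + (j:ℤ) from by ring,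
      show (-2 : ℤ) = -1 + -1 from by ring,
      show kap n i j - (n:ℤ) - (n:ℤ) - (i:ℤ) + (j:ℤ) + 1 + 1
        = kap n i j - (n:ℤ) - (n:ℤ) - (i:ℤ) + (j:ℤ) + 1 + 1 from rfl]
  have hn : q ^ (n:ℤ) ≠ 0 := zpow_ne_zero _ hq
  have hi : q ^ (i:ℤ) ≠ 0 := zpow_ne_zero _ hq
  have hj : q ^ (j:ℤ) ≠ 0 := zpow_ne_zero _ hq
  have hk : q ^ (kap n i j) ≠ 0 := zpow_ne_zero _ hq
  simp only [zpow_add₀ ha, zpow_add₀ hq, zpow_sub₀ ha, zpow_sub₀ hq, zpow_neg, zpow_one, inv_inv, inv_div, div_eq_mul_inv]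
  ring
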